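/- Let k be a field equipped with an additive valuation v : k → ℝ ∪ {+∞} (v(x) = +∞ iff x = 0, v(xy) = v(x) + v(y), v(x+y) ≥ min(v(x), v(y))) and a group homomorphism T : (ℝ,+) → (kˣ,·) with v(T(λ)) = λ for all λ ∈ ℝ. For w ∈ ℝⁿ define Φ_w on the Laurent polynomial ring in n variables over k by Φ_w(z^α) = T(⟨α, w⟩)·z^α, extended k-linearly. Then: (a) Φ_w is a k-algebra homomorphism; (b) Φ_w ∘ Φ_{w'} = Φ_{w+w'} and Φ_0 = id, so each Φ_w is an automorphism with inverse Φ_{−w}, and for any triple w, w', w'' with w + w' = w'' the corresponding triangle of maps commutes; (c) for every p ∈ ℝⁿ and every Laurent polynomial F, val_p(Φ_w(F)) = val_{p+w}(F), where val_p(Σ c_α z^α) = min_{α}(v(c_α) + ⟨α, p⟩). -/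

import Mathlib

/-- The standard pairing `⟨α, w⟩ = Σᵢ αᵢ wᵢ` of `α ∈ ℤⁿ` with `w ∈ ℝⁿ`. -/
noncomputable def zpairing {n : ℕ} (α : Fin n → ℤ) (w : Fin n → ℝ) : ℝ :=
  ∑ i, (α i : ℝ) * w i

/-- The monomial `z^α` in the Laurent polynomial ring in `n` variables over `k`. -/
noncomputable def zmon {k : Type*} [Field k] {n : ℕ} (α : Fin n → ℤ) :
    AddMonoidAlgebra k (Fin n → ℤ) :=
  AddMonoidAlgebra.single α 1

/-- The valuation `val_p(F) = min_{α ∈ supp F} (v(c_α) + ⟨α, p⟩)` of a Laurent polynomial at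
`p ∈ ℝⁿ` (with `val_p(0) = +∞`). -/
noncomputable def valPt {k : Type*} [Field k] {n : ℕ} (v : k → EReal)
    (p : Fin n → ℝ) (F : AddMonoidAlgebra k (Fin n → ℤ)) : EReal :=
  F.coeff.support.inf fun α => v (F.coeff α) + ((zpairing α p : ℝ) : EReal)

/-- Change-of-basepoint automorphisms of the Laurent polynomial ring over a valued field `k`
equipped with `T : (ℝ,+) → (kˣ,·)` with `v(T(λ)) = λ`: the `k`-linear maps `Φ_w` determined on
monomials by `Φ_w(z^α) = T(⟨α,w⟩)·z^α` satisfy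
(a) each `Φ_w` is a `k`-algebra homomorphism;
(b) `Φ_w ∘ Φ_{w'} = Φ_{w+w'}` and `Φ_0 = id`, so each `Φ_w` is an automorphism with inverse
`Φ_{−w}`, and the triangles for triples `w + w' = w''` commute;
(c) `val_p(Φ_w(F)) = val_{p+w}(F)` for every `p ∈ ℝⁿ` and every `F`. -/
theorem basepoint_change_automorphisms {k : Type*} [Field k] (n : ℕ)
    (v : k → EReal)
    (hv_top : ∀ x : k, v x = ⊤ ↔ x = 0) (hv_bot : ∀ x : k, v x ≠ ⊥)
    (hv_mul : ∀ x y : k, v (x * y) = v x + v y)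
    (hv_add : ∀ x y : k, min (v x) (v y) ≤ v (x + y))
    (T : ℝ → kˣ) (hT_add : ∀ lam mu : ℝ, T (lam + mu) = T lam * T mu)
    (hT_val : ∀ lam : ℝ, v ((T lam : kˣ) : k) = (lam : EReal))
    (Φ : (Fin n → ℝ) →
      (AddMonoidAlgebra k (Fin n → ℤ) →ₗ[k] AddMonoidAlgebra k (Fin n → ℤ)))
    (hΦ : ∀ (w : Fin n → ℝ) (α : Fin n → ℤ),
      Φ w (zmon α) = ((T (zpairing α w) : kˣ) : k) • (zmon α : AddMonoidAlgebra k (Fin n → ℤ))) :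
    (∀ (w : Fin n → ℝ) (F G : AddMonoidAlgebra k (Fin n → ℤ)),
      Φ w (F * G) = Φ w F * Φ w G) ∧
    (∀ w : Fin n → ℝ, Φ w (1 : AddMonoidAlgebra k (Fin n → ℤ)) = 1) ∧
    (∀ w w' : Fin n → ℝ, Φ w ∘ₗ Φ w' = Φ (w + w')) ∧
    (Φ 0 = LinearMap.id) ∧
    (∀ w : Fin n → ℝ, Φ w ∘ₗ Φ (-w) = LinearMap.id ∧ Φ (-w) ∘ₗ Φ w = LinearMap.id) ∧
    (∀ w : Fin n → ℝ, Function.Bijective (Φ w)) ∧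
    (∀ w w' w'' : Fin n → ℝ, w + w' = w'' → Φ w ∘ₗ Φ w' = Φ w'') ∧
    (∀ (w p : Fin n → ℝ) (F : AddMonoidAlgebra k (Fin n → ℤ)),
      valPt v p (Φ w F) = valPt v (p + w) F) := by
  -- T 0 = 1
  have T0 : T 0 = 1 := by
    have h := hT_add 0 0
    rw [add_zero] at h
    exact left_eq_mul.mp h
  -- pairing is additive in each argument
  have zp_addr : ∀ (α : Fin n → ℤ) (w w' : Fin n → ℝ),
      zpairing α (w + w') = zpairing α w + zpairing α w' := by
    intro α w w'
    simp [zpairing, mul_add, Finset.sum_add_distrib]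
  have zp_addl : ∀ (α β : Fin n → ℤ) (w : Fin n → ℝ),
      zpairing (α + β) w = zpairing α w + zpairing β w := by
    intro α β w
    simp [zpairing, add_mul, Finset.sum_add_distrib]
  have zp_zero : ∀ α : Fin n → ℤ, zpairing α (0 : Fin n → ℝ) = 0 := by
    intro α; simp [zpairing]
  have zp_zero' : ∀ w : Fin n → ℝ, zpairing (0 : Fin n → ℤ) w = 0 := by
    intro w; simp [zpairing]
  -- value on general singles
  have Φ_single : ∀ (w : Fin n → ℝ) (α : Fin n → ℤ) (a : k),
      Φ w (AddMonoidAlgebra.single α a)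
        = AddMonoidAlgebra.single α (((T (zpairing α w) : kˣ) : k) * a) := by
    intro w α a
    have h1 : (AddMonoidAlgebra.single α a : AddMonoidAlgebra k (Fin n → ℤ)) = a • zmon α := by
      rw [zmon, AddMonoidAlgebra.smul_single', mul_one]
    rw [h1, map_smul, hΦ, smul_smul, zmon, AddMonoidAlgebra.smul_single', mul_one, mul_comm]
  -- pointwise formula
  have Φ_apply : ∀ (w : Fin n → ℝ) (F : AddMonoidAlgebra k (Fin n → ℤ)) (β : Fin n → ℤ),
      (Φ w F).coeff β = ((T (zpairing β w) : kˣ) : k) * F.coeff β := by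
    intro w F β
    induction F using AddMonoidAlgebra.induction_linear with
    | zero => simp
    | add f g hf hg =>
        rw [map_add]
        rw [AddMonoidAlgebra.coeff_add, AddMonoidAlgebra.coeff_add, Finsupp.add_apply, Finsupp.add_apply]
        rw [hf, hg, mul_add]
    | single α a =>
        rw [Φ_single]
        by_cases h : α = β
        · subst h; simp [AddMonoidAlgebra.coeff_single, Finsupp.single_apply]
        · simp [AddMonoidAlgebra.coeff_single, Finsupp.single_apply, h]
  have supp_eq : ∀ (w : Fin n → ℝ) (F : AddMonoidAlgebra k (Fin n → ℤ)),
      (Φ w F).coeff.support = F.coeff.support := by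
    intro w F
    ext β
    simp [Finsupp.mem_support_iff, Φ_apply, Units.mul_right_eq_zero]
  -- (a) multiplicativity
  have hmul : ∀ (w : Fin n → ℝ) (F G : AddMonoidAlgebra k (Fin n → ℤ)),
      Φ w (F * G) = Φ w F * Φ w G := by
    intro w F G
    induction F using AddMonoidAlgebra.induction_linear with
    | zero => simp
    | add f g hf hg => rw [add_mul, map_add, map_add, hf, hg, add_mul]
    | single α a =>
        induction G using AddMonoidAlgebra.induction_linear with
        | zero => simp
        | add f g hf hg => rw [mul_add, map_add, map_add, hf, hg, mul_add]
        | single β b =>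
            rw [AddMonoidAlgebra.single_mul_single, Φ_single, Φ_single, Φ_single,
              AddMonoidAlgebra.single_mul_single, zp_addl, hT_add]
            congr 1
            push_cast [Units.val_mul]
            ring
  have hone : ∀ w : Fin n → ℝ, Φ w (1 : AddMonoidAlgebra k (Fin n → ℤ)) = 1 := by
    intro w
    rw [AddMonoidAlgebra.one_def, Φ_single, zp_zero', T0]
    simp
  -- (b) composition
  have hcomp : ∀ w w' : Fin n → ℝ, Φ w ∘ₗ Φ w' = Φ (w + w') := by
    intro w w'
    apply LinearMap.ext
    intro F
    apply AddMonoidAlgebra.ext; apply Finsupp.ext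
    intro β
    simp only [LinearMap.comp_apply, Φ_apply, zp_addr, hT_add, Units.val_mul]
    ring
  have hzero : Φ (0 : Fin n → ℝ) = LinearMap.id := by
    apply LinearMap.ext
    intro F
    apply AddMonoidAlgebra.ext; apply Finsupp.ext
    intro β
    simp [Φ_apply, zp_zero, T0]
  have hinv : ∀ w : Fin n → ℝ,
      Φ w ∘ₗ Φ (-w) = LinearMap.id ∧ Φ (-w) ∘ₗ Φ w = LinearMap.id := by
    intro w
    constructor
    · rw [hcomp, add_neg_cancel, hzero]
    · rw [hcomp, neg_add_cancel, hzero]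
  have hbij : ∀ w : Fin n → ℝ, Function.Bijective (Φ w) := by
    intro w
    refine Function.bijective_iff_has_inverse.mpr ⟨Φ (-w), ?_, ?_⟩
    · intro F; exact DFunLike.congr_fun (hinv w).2 F
    · intro F; exact DFunLike.congr_fun (hinv w).1 F
  refine ⟨hmul, hone, hcomp, hzero, hinv, hbij, fun w w' w'' h => by rw [hcomp, h], ?_⟩
  -- (c) valuations
  intro w p F
  unfold valPt
  rw [supp_eq]
  apply Finset.inf_congr rfl
  intro α hα
  rw [Φ_apply, hv_mul, hT_val, zp_addr, EReal.coe_add]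
  abel
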